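/- Let X be an isotropic Gaussian random vector on ℝⁿ with law N(μ, σ²Iₙ), and let W be a real m×n matrix with Moore–Penrose pseudo-inverse W† defined via a singular value decomposition. Set Z := W X and X⊥ := (Iₙ − W†W) X. Then for almost every realization z of Z, the conditional distribution of X given Z = z equals the law of X⊥ translated by the constant vector W† z; that is, the conditional distribution kernel of X given Z applied at z is the pushforward of the law of X⊥ under the map v ↦ v + W† z. -/

import Mathlib

open Matrix MeasureTheory ProbabilityTheory Classical

/-- The multivariate Gaussian measure on `ℝⁿ` with mean `m` and (positive semidefinite)
covariance matrix `S`: the pushforward of a vector of `n` i.i.d. standard Gaussians under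
`x ↦ m + √S x`, where `√S` is the positive semidefinite square root of `S`.
(Junk value `0` if `S` is not positive semidefinite.) -/
noncomputable def multiGaussian {n : ℕ} (m : Fin n → ℝ) (S : Matrix (Fin n) (Fin n) ℝ) :
    Measure (Fin n → ℝ) :=
  if hS : S.PosSemidef then
    Measure.map (fun x => m + (hS.1.eigenvectorUnitary.1 *
      diagonal ((√·) ∘ hS.1.eigenvalues) *
      (star hS.1.eigenvectorUnitary : Matrix (Fin n) (Fin n) ℝ)).mulVec x)
      (Measure.pi fun _ : Fin n => gaussianReal 0 1)
  else 0

set_option maxHeartbeats 2000000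

open scoped ENNReal NNReal

namespace CondPerpAux

lemma measurable_mulVec {k l : ℕ} (M : Matrix (Fin k) (Fin l) ℝ) :
    Measurable (fun x : Fin l → ℝ => M.mulVec x) := by
  refine measurable_pi_lambda _ fun i => ?_
  simpa [Matrix.mulVec, dotProduct] using
    Finset.measurable_sum Finset.univ
      (fun j _ => (by fun_prop : Measurable fun c : Fin l → ℝ => M i j * c j))

lemma lintegral_pi_prod {α : Type*} [MeasurableSpace α] (μ : Measure α) [SigmaFinite μ] :
    ∀ (k : ℕ) (f : Fin k → α → ℝ≥0∞), (∀ i, Measurable (f i)) →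
      ∫⁻ x, ∏ i, f i (x i) ∂(Measure.pi fun _ : Fin k => μ) = ∏ i, ∫⁻ x, f i x ∂μ := by
  intro k
  induction k with
  | zero => intro f _; simp
  | succ k ih =>
    intro f hf
    have h := measurePreserving_piFinSuccAbove (fun _ : Fin (k+1) => μ) 0
    have hF : Measurable (fun q : α × (Fin k → α) => f 0 q.1 * ∏ j : Fin k, f j.succ (q.2 j)) := by
      refine ((hf 0).comp measurable_fst).mul ?_
      exact Finset.measurable_prod _ fun j _ =>
        (hf j.succ).comp ((measurable_pi_apply j).comp measurable_snd)
    calc ∫⁻ x, ∏ i, f i (x i) ∂(Measure.pi fun _ : Fin (k+1) => μ)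
        = ∫⁻ x, (fun q : α × (Fin k → α) => f 0 q.1 * ∏ j : Fin k, f j.succ (q.2 j))
            ((MeasurableEquiv.piFinSuccAbove (fun _ => α) 0) x)
            ∂(Measure.pi fun _ : Fin (k+1) => μ) := by
          refine lintegral_congr fun x => ?_
          rw [Fin.prod_univ_succ]
          rfl
      _ = ∫⁻ q : α × (Fin k → α), f 0 q.1 * ∏ j : Fin k, f j.succ (q.2 j)
            ∂(μ.prod (Measure.pi fun _ : Fin k => μ)) := h.lintegral_comp hF
      _ = (∫⁻ x, f 0 x ∂μ) *
            ∫⁻ v : Fin k → α, ∏ j : Fin k, f j.succ (v j)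
              ∂(Measure.pi fun _ : Fin k => μ) := by
          have hG : Measurable fun v : Fin k → α => ∏ j : Fin k, f j.succ (v j) :=
            Finset.measurable_prod Finset.univ fun j _ =>
              (hf j.succ).comp (measurable_pi_apply j)
          exact lintegral_prod_mul (hf 0).aemeasurable hG.aemeasurable
      _ = (∫⁻ x, f 0 x ∂μ) * ∏ j : Fin k, ∫⁻ x, f j.succ x ∂μ := by
          rw [ih _ fun j => hf j.succ]
      _ = ∏ i, ∫⁻ x, f i x ∂μ :=
          (Fin.prod_univ_succ fun i => ∫⁻ x, f i x ∂μ).symm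

lemma pi_gaussian_eq (k : ℕ) :
    (Measure.pi fun _ : Fin k => gaussianReal 0 1) =
      (volume : Measure (Fin k → ℝ)).withDensity (fun x => ∏ i, gaussianPDF 0 1 (x i)) := by
  refine Measure.pi_eq (μ' := (volume : Measure (Fin k → ℝ)).withDensity
      fun x => ∏ i, gaussianPDF 0 1 (x i)) (μ := fun _ : Fin k => gaussianReal 0 1)
      fun s hs => ?_
  rw [withDensity_apply _ (MeasurableSet.univ_pi hs),
    ← lintegral_indicator (MeasurableSet.univ_pi hs)]
  have hind : ∀ x : Fin k → ℝ,
      (Set.univ.pi s).indicator (fun x => ∏ i, gaussianPDF 0 1 (x i)) x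
        = ∏ i, (s i).indicator (gaussianPDF 0 1) (x i) := by
    intro x
    by_cases hx : x ∈ Set.univ.pi s
    · rw [Set.indicator_of_mem hx]
      refine Finset.prod_congr rfl fun i _ => ?_
      rw [Set.indicator_of_mem (hx i (Set.mem_univ i))]
    · rw [Set.indicator_of_notMem hx]
      rw [Set.mem_univ_pi] at hx
      push_neg at hx
      obtain ⟨i, hi⟩ := hx
      exact (Finset.prod_eq_zero (Finset.mem_univ i)
        (Set.indicator_of_notMem hi _)).symm
  rw [lintegral_congr hind, volume_pi,
    lintegral_pi_prod volume k _ (fun i => (measurable_gaussianPDF 0 1).indicator (hs i))]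
  refine Finset.prod_congr rfl fun i _ => ?_
  rw [lintegral_indicator (hs i), gaussianReal_of_var_ne_zero 0 one_ne_zero,
    withDensity_apply _ (hs i)]

lemma map_withDensity_comp {α β : Type*} [MeasurableSpace α] [MeasurableSpace β]
    (μ : Measure α) {T : α → β} (hT : Measurable T) {φ : β → ℝ≥0∞} (hφ : Measurable φ) :
    (μ.withDensity (fun x => φ (T x))).map T = (μ.map T).withDensity φ := by
  ext s hs
  rw [Measure.map_apply hT hs, withDensity_apply _ (hT hs), withDensity_apply _ hs,
    ← setLIntegral_map hs hφ hT]

lemma sum_neg_sq_div (k : ℕ) (w : Fin k → ℝ) :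
    ∑ x : Fin k, -w x ^ 2 / 2 = (-∑ i : Fin k, w i ^ 2) / 2 := by
  rw [← Finset.sum_div]
  congr 1
  rw [← Finset.sum_neg_distrib]

lemma prod_gaussianPDF_eq {k : ℕ} (y z : Fin k → ℝ)
    (h : ∑ i, (y i) ^ 2 = ∑ i, (z i) ^ 2) :
    ∏ i, gaussianPDF 0 1 (y i) = ∏ i, gaussianPDF 0 1 (z i) := by
  have hpdf : ∀ w : Fin k → ℝ, ∏ i, gaussianPDF 0 1 (w i)
      = ENNReal.ofReal ((Real.sqrt (2 * Real.pi))⁻¹ ^ k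
          * Real.exp ((-(∑ i, (w i) ^ 2)) / 2)) := by
    intro w
    simp only [gaussianPDF]
    rw [← ENNReal.ofReal_prod_of_nonneg fun i _ => gaussianPDFReal_nonneg 0 1 (w i)]
    congr 1
    simp only [gaussianPDFReal, NNReal.coe_one, mul_one, sub_zero]
    rw [Finset.prod_mul_distrib, Finset.prod_const, ← Real.exp_sum, Finset.card_univ,
      Fintype.card_fin, sum_neg_sq_div]
  rw [hpdf, hpdf, h]

lemma gaussianPi_map_orth {k : ℕ} (V : Matrix (Fin k) (Fin k) ℝ) (hV : Vᵀ * V = 1) :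
    (Measure.pi fun _ : Fin k => gaussianReal 0 1).map V.mulVec
      = Measure.pi fun _ : Fin k => gaussianReal 0 1 := by
  have hdet2 : V.det * V.det = 1 := by
    have := congrArg Matrix.det hV
    rwa [Matrix.det_mul, Matrix.det_transpose, Matrix.det_one] at this
  have hdetabs : |V.det| = 1 := by nlinarith [abs_nonneg V.det, abs_mul_abs_self V.det]
  have hdetne : V.det ≠ 0 := by
    intro h; rw [h, abs_zero] at hdetabs; exact zero_ne_one hdetabs
  have hsum : ∀ x : Fin k → ℝ, ∑ i, (V.mulVec x i) ^ 2 = ∑ i, (x i) ^ 2 := by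
    intro x
    have h2 : V.mulVec x ᵥ* V = (Vᵀ * V) *ᵥ x := by
      rw [← Matrix.mulVec_mulVec, Matrix.mulVec_transpose]
    have h1 : V.mulVec x ⬝ᵥ V.mulVec x = x ⬝ᵥ x := by
      rw [Matrix.dotProduct_mulVec, h2, hV, Matrix.one_mulVec]
    simpa [dotProduct, pow_two] using h1
  have hmesφ : Measurable fun x : Fin k → ℝ => ∏ i, gaussianPDF 0 1 (x i) :=
    Finset.measurable_prod _ fun i _ =>
      (measurable_gaussianPDF 0 1).comp (measurable_pi_apply i)
  have hvol : (volume : Measure (Fin k → ℝ)).map V.mulVec = volume := by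
    have hlin : (V.mulVec : (Fin k → ℝ) → (Fin k → ℝ)) = ⇑(Matrix.toLin' V) := by
      funext x; rw [Matrix.toLin'_apply]
    rw [hlin, Real.map_matrix_volume_pi_eq_smul_volume_pi hdetne, abs_inv, hdetabs]
    simp
  have hφT : (fun x : Fin k → ℝ => ∏ i, gaussianPDF 0 1 (V.mulVec x i))
      = fun x => ∏ i, gaussianPDF 0 1 (x i) :=
    funext fun x => prod_gaussianPDF_eq _ _ (hsum x)
  calc (Measure.pi fun _ : Fin k => gaussianReal 0 1).map V.mulVec
      = ((volume : Measure (Fin k → ℝ)).withDensity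
          (fun x => ∏ i, gaussianPDF 0 1 (V.mulVec x i))).map V.mulVec := by
        rw [pi_gaussian_eq, hφT]
    _ = ((volume : Measure (Fin k → ℝ)).map V.mulVec).withDensity
          (fun x => ∏ i, gaussianPDF 0 1 (x i)) :=
        map_withDensity_comp (T := fun x => V.mulVec x)
          (φ := fun x => ∏ i, gaussianPDF 0 1 (x i)) volume (measurable_mulVec V) hmesφ
    _ = Measure.pi fun _ : Fin k => gaussianReal 0 1 := by
        rw [hvol, ← pi_gaussian_eq]

end CondPerpAux

open CondPerpAux

/-- If `X ~ N(μ, σ²Iₙ)`, `Z = W X` and `X⊥ = (Iₙ - W†W) X`, then for almost every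
realization `z` of `Z`, the conditional distribution of `X` given `Z = z` is the law of
`X⊥` translated by `W† z`. -/
theorem condDistrib_eq_translated_perp {Ω : Type*} [MeasurableSpace Ω]
    (Pr : Measure Ω) [IsProbabilityMeasure Pr]
    {n m : ℕ} (hn : 1 ≤ n) (hm : 1 ≤ m) (μ : Fin n → ℝ) (σ : ℝ) (hσ : 0 < σ)
    (X : Ω → Fin n → ℝ) (hX : Measurable X)
    (hlaw : Measure.map X Pr = multiGaussian μ (σ ^ 2 • (1 : Matrix (Fin n) (Fin n) ℝ)))
    (W : Matrix (Fin m) (Fin n) ℝ) (Wdag : Matrix (Fin n) (Fin m) ℝ)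
    (U : Matrix (Fin m) (Fin m) ℝ) (V : Matrix (Fin n) (Fin n) ℝ)
    (D : Matrix (Fin m) (Fin n) ℝ) (Ddag : Matrix (Fin n) (Fin m) ℝ)
    (hU : Uᵀ * U = 1) (hV : Vᵀ * V = 1)
    (hD_off : ∀ (i : Fin m) (j : Fin n), (i : ℕ) ≠ (j : ℕ) → D i j = 0)
    (hD_nonneg : ∀ (i : Fin m) (j : Fin n), (i : ℕ) = (j : ℕ) → 0 ≤ D i j)
    (hDdag_off : ∀ (i : Fin n) (j : Fin m), (i : ℕ) ≠ (j : ℕ) → Ddag i j = 0)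
    (hDdag_diag : ∀ (i : Fin n) (j : Fin m), (i : ℕ) = (j : ℕ) →
      Ddag i j = if D j i = 0 then 0 else (D j i)⁻¹)
    (hW : W = U * D * Vᵀ) (hWdag : Wdag = V * Ddag * Uᵀ) :
    ∀ᵐ z ∂(Measure.map (fun ω => W.mulVec (X ω)) Pr),
      condDistrib X (fun ω => W.mulVec (X ω)) Pr z
        = Measure.map (fun v => v + Wdag.mulVec z)
            (Measure.map (fun ω => ((1 : Matrix (Fin n) (Fin n) ℝ) - Wdag * W).mulVec (X ω))
              Pr) := by
  classical
  set Z : Ω → Fin m → ℝ := fun ω => W.mulVec (X ω) with hZdef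
  set Xp : Ω → Fin n → ℝ :=
    fun ω => ((1 : Matrix (Fin n) (Fin n) ℝ) - Wdag * W).mulVec (X ω) with hXpdef
  have hmZ : Measurable Z := (measurable_mulVec W).comp hX
  have hmXp : Measurable Xp := (measurable_mulVec _).comp hX
  -- ### Step 1 : the law of X as a pushforward of the standard Gaussian
  set g : Measure (Fin n → ℝ) := Measure.pi fun _ : Fin n => gaussianReal 0 1 with hgdef
  haveI hPg : IsProbabilityMeasure g := by rw [hgdef]; infer_instance
  have hs1sq : (σ • (1 : Matrix (Fin n) (Fin n) ℝ)) * (σ • 1) = σ ^ 2 • 1 := by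
    rw [Matrix.smul_mul, Matrix.mul_smul, smul_smul, Matrix.one_mul, sq]
  have hsmul1 : ∀ a : ℝ, 0 ≤ a → (a • (1 : Matrix (Fin n) (Fin n) ℝ)).PosSemidef := by
    intro a ha
    exact Matrix.PosSemidef.one.smul ha
  have hs1 : (σ • (1 : Matrix (Fin n) (Fin n) ℝ)).PosSemidef := hsmul1 σ hσ.le
  have hS : ((σ : ℝ) ^ 2 • (1 : Matrix (Fin n) (Fin n) ℝ)).PosSemidef :=
    hsmul1 (σ ^ 2) (sq_nonneg σ)
  have hsqrt : (hS.1.eigenvectorUnitary.1 * diagonal ((√·) ∘ hS.1.eigenvalues) *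
      (star hS.1.eigenvectorUnitary : Matrix (Fin n) (Fin n) ℝ)) = σ • 1 := by
    have h1 : hS.1.cfc Real.sqrt = (hS.1.eigenvectorUnitary.1 *
        diagonal ((√·) ∘ hS.1.eigenvalues) *
        (star hS.1.eigenvectorUnitary : Matrix (Fin n) (Fin n) ℝ)) := by
      simp [IsHermitian.cfc, Function.comp_def]
    rw [← h1, ← hS.1.cfc_eq, ← Algebra.algebraMap_eq_smul_one, cfc_algebraMap,
      Real.sqrt_sq hσ.le, Algebra.algebraMap_eq_smul_one]
  have hlaw' : Measure.map X Pr = g.map (fun x => μ + σ • x) := by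
    rw [hlaw, multiGaussian, dif_pos hS]
    congr 1
    funext x
    rw [hsqrt, Matrix.smul_mulVec, Matrix.one_mulVec]
  have hmaff : Measurable fun x : Fin n → ℝ => μ + σ • x :=
    measurable_const.add (measurable_id.const_smul σ)
  -- law transfer through a measurable function, rotated by V
  have lawF : ∀ {γ : Type} [MeasurableSpace γ], ∀ (F : (Fin n → ℝ) → γ), Measurable F →
      Pr.map (fun ω => F (X ω)) = g.map (fun y => F (μ + σ • V.mulVec y)) := by
    intro γ _ F hF
    have h1 : Pr.map (fun ω => F (X ω)) = (Pr.map X).map F :=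
      (Measure.map_map hF hX).symm
    rw [h1, hlaw', Measure.map_map hF hmaff]
    conv_lhs => rw [show g = g.map V.mulVec from (gaussianPi_map_orth V hV).symm]
    rw [Measure.map_map (hF.comp hmaff) (measurable_mulVec V)]
    rfl
  -- ### Step 2 : matrix algebra
  have hVV : V * Vᵀ = 1 := mul_eq_one_comm.mp hV
  set c : Fin n → ℝ := Vᵀ.mulVec μ with hcdef
  set P : Matrix (Fin n) (Fin n) ℝ := Ddag * D with hPdef
  have hWV : W * V = U * D := by
    rw [hW, Matrix.mul_assoc, hV, Matrix.mul_one]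
  have hWdagUD : Wdag * (U * D) = V * P := by
    rw [hWdag, hPdef, Matrix.mul_assoc, Matrix.mul_assoc, ← Matrix.mul_assoc Uᵀ U D, hU,
      Matrix.one_mul, ← Matrix.mul_assoc]
  have hperpV : ((1 : Matrix (Fin n) (Fin n) ℝ) - Wdag * W) * V = V * (1 - P) := by
    rw [Matrix.sub_mul, Matrix.mul_sub, Matrix.one_mul, Matrix.mul_one]
    congr 1
    rw [Matrix.mul_assoc, hWV, hWdagUD]
  -- pointwise identities
  have hAeq : ∀ y : Fin n → ℝ, μ + σ • V.mulVec y = V.mulVec (c + σ • y) := by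
    intro y
    rw [Matrix.mulVec_add, Matrix.mulVec_smul, hcdef, Matrix.mulVec_mulVec, hVV,
      Matrix.one_mulVec]
  set f₁ : (Fin n → ℝ) → (Fin m → ℝ) := fun y => (U * D).mulVec (c + σ • y) with hf₁def
  set f₂ : (Fin n → ℝ) → (Fin n → ℝ) := fun y => (V * (1 - P)).mulVec (c + σ • y) with hf₂def
  have hmf₁ : Measurable f₁ := (measurable_mulVec _).comp
    (measurable_const.add (measurable_id.const_smul σ))
  have hmf₂ : Measurable f₂ := (measurable_mulVec _).comp
    (measurable_const.add (measurable_id.const_smul σ))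
  have hid1 : ∀ y : Fin n → ℝ, W.mulVec (μ + σ • V.mulVec y) = f₁ y := by
    intro y
    rw [hAeq, Matrix.mulVec_mulVec, hWV]
  have hid3 : ∀ y : Fin n → ℝ,
      ((1 : Matrix (Fin n) (Fin n) ℝ) - Wdag * W).mulVec (μ + σ • V.mulVec y) = f₂ y := by
    intro y
    rw [hAeq, Matrix.mulVec_mulVec, hperpV]
  have hid4 : ∀ y : Fin n → ℝ, f₂ y + Wdag.mulVec (f₁ y) = V.mulVec (c + σ • y) := by
    intro y
    show (V * (1 - P)).mulVec (c + σ • y) + Wdag.mulVec ((U * D).mulVec (c + σ • y)) = _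
    rw [Matrix.mulVec_mulVec, hWdagUD,
      ← Matrix.mulVec_mulVec (c + σ • y) V (1 - P),
      ← Matrix.mulVec_mulVec (c + σ • y) V P,
      ← Matrix.mulVec_add, ← Matrix.add_mulVec, sub_add_cancel, Matrix.one_mulVec]
  -- ### Step 3 : structure of P and coordinate dependence
  have hP_off : ∀ i j : Fin n, i ≠ j → P i j = 0 := by
    intro i j hij
    rw [hPdef, Matrix.mul_apply]
    refine Finset.sum_eq_zero fun k _ => ?_
    by_cases h1 : Ddag i k = 0
    · rw [h1, zero_mul]
    by_cases h2 : D k j = 0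
    · rw [h2, mul_zero]
    exfalso
    have e1 : (i : ℕ) = (k : ℕ) := by
      by_contra h; exact h1 (hDdag_off i k h)
    have e2 : (k : ℕ) = (j : ℕ) := by
      by_contra h; exact h2 (hD_off k j h)
    exact hij (Fin.ext (e1.trans e2))
  have hP_diag1 : ∀ (j : Fin m) (i : Fin n), D j i ≠ 0 → P i i = 1 := by
    intro j i hD
    have hji : (j : ℕ) = (i : ℕ) := by
      by_contra h; exact hD (hD_off j i h)
    rw [hPdef, Matrix.mul_apply]
    rw [Finset.sum_eq_single j]
    · rw [hDdag_diag i j hji.symm, if_neg hD, inv_mul_cancel₀ hD]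
    · intro b _ hb
      have : (i : ℕ) ≠ (b : ℕ) := by
        intro h
        exact hb (Fin.ext (show (b : ℕ) = (j : ℕ) by omega))
      rw [hDdag_off i b this, zero_mul]
    · intro h; exact absurd (Finset.mem_univ j) h
  have hP_diag01 : ∀ i : Fin n, P i i = 0 ∨ P i i = 1 := by
    intro i
    by_cases hD : ∃ j : Fin m, D j i ≠ 0
    · obtain ⟨j, hj⟩ := hD
      exact Or.inr (hP_diag1 j i hj)
    · push_neg at hD
      left
      rw [hPdef, Matrix.mul_apply]
      exact Finset.sum_eq_zero fun j _ => by rw [hD j, mul_zero]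
  -- D and (1 - P) only see certain coordinates
  have hDdep : ∀ v w : Fin n → ℝ, (∀ i, P i i = 1 → v i = w i) →
      D.mulVec v = D.mulVec w := by
    intro v w hvw
    funext j
    simp only [Matrix.mulVec, dotProduct]
    refine Finset.sum_congr rfl fun i _ => ?_
    by_cases hD : D j i = 0
    · rw [hD, zero_mul, zero_mul]
    · rw [hvw i (hP_diag1 j i hD)]
  have hQdep : ∀ v w : Fin n → ℝ, (∀ i, P i i ≠ 1 → v i = w i) →
      (1 - P).mulVec v = (1 - P).mulVec w := by
    intro v w hvw
    funext k
    simp only [Matrix.mulVec, dotProduct]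
    refine Finset.sum_congr rfl fun i _ => ?_
    by_cases hki : k = i
    · subst hki
      by_cases h1 : P k k = 1
      · have : (1 - P) k k = 0 := by
          simp [Matrix.sub_apply, Matrix.one_apply_eq, h1]
        rw [this, zero_mul, zero_mul]
      · rw [hvw k h1]
    · have : (1 - P) k i = 0 := by
        simp [Matrix.sub_apply, Matrix.one_apply_ne hki, hP_off k i hki]
      rw [this, zero_mul, zero_mul]
  -- ### Step 4 : laws of Z, Xp and the pair (Z, X)
  have hμZ : Pr.map Z = g.map f₁ := by
    rw [hZdef]
    rw [lawF (fun x => W.mulVec x) (measurable_mulVec W)]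
    congr 1
    funext y
    exact hid1 y
  have hνg : Pr.map Xp = g.map f₂ := by
    rw [hXpdef]
    rw [lawF (fun x => ((1 : Matrix (Fin n) (Fin n) ℝ) - Wdag * W).mulVec x)
      (measurable_mulVec _)]
    congr 1
    funext y
    exact hid3 y
  have hρlaw : Pr.map (fun ω => (Z ω, X ω))
      = g.map (fun y => (f₁ y, V.mulVec (c + σ • y))) := by
    have : (fun ω => (Z ω, X ω)) = fun ω => ((fun x => (W.mulVec x, x)) (X ω)) := rfl
    rw [this, lawF (fun x => (W.mulVec x, x)) ((measurable_mulVec W).prodMk measurable_id)]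
    congr 1
    funext y
    exact Prod.ext (hid1 y) (hAeq y)
  -- ### Step 5 : independence via coordinate splitting
  set p : Fin n → Prop := fun i => P i i = 1 with hpdef
  letI : DecidablePred p := Classical.decPred p
  set e := MeasurableEquiv.piEquivPiSubtypeProd (fun _ : Fin n => ℝ) p with hedef
  set g₁ : Measure ({i : Fin n // p i} → ℝ) := Measure.pi fun _ => gaussianReal 0 1 with hg₁def
  set g₂ : Measure ({i : Fin n // ¬ p i} → ℝ) := Measure.pi fun _ => gaussianReal 0 1 with hg₂def
  haveI : IsProbabilityMeasure g₁ := by rw [hg₁def]; infer_instance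
  haveI : IsProbabilityMeasure g₂ := by rw [hg₂def]; infer_instance
  have he : MeasurePreserving e g (g₁.prod g₂) :=
    measurePreserving_piEquivPiSubtypeProd (fun _ : Fin n => gaussianReal 0 1) p
  set ext1 : ({i : Fin n // p i} → ℝ) → (Fin n → ℝ) :=
    fun u i => if h : p i then u ⟨i, h⟩ else 0 with hext1def
  set ext2 : ({i : Fin n // ¬ p i} → ℝ) → (Fin n → ℝ) :=
    fun u i => if h : p i then 0 else u ⟨i, h⟩ with hext2def
  have hmext1 : Measurable ext1 := by
    refine measurable_pi_lambda _ fun i => ?_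
    by_cases h : p i
    · simp only [hext1def, dif_pos h]
      exact measurable_pi_apply _
    · simp only [hext1def, dif_neg h]
      exact measurable_const
  have hmext2 : Measurable ext2 := by
    refine measurable_pi_lambda _ fun i => ?_
    by_cases h : p i
    · simp only [hext2def, dif_pos h]
      exact measurable_const
    · simp only [hext2def, dif_neg h]
      exact measurable_pi_apply _
  set φ₁ : ({i : Fin n // p i} → ℝ) → (Fin m → ℝ) :=
    fun u => (U * D).mulVec (c + σ • ext1 u) with hφ₁def
  set φ₂ : ({i : Fin n // ¬ p i} → ℝ) → (Fin n → ℝ) :=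
    fun u => (V * (1 - P)).mulVec (c + σ • ext2 u) with hφ₂def
  have hmφ₁ : Measurable φ₁ := (measurable_mulVec _).comp
    (measurable_const.add (hmext1.const_smul σ))
  have hmφ₂ : Measurable φ₂ := (measurable_mulVec _).comp
    (measurable_const.add (hmext2.const_smul σ))
  have hf₁e : ∀ y, f₁ y = φ₁ ((e y).1) := by
    intro y
    rw [hf₁def, hφ₁def]
    show (U * D).mulVec (c + σ • y) = (U * D).mulVec (c + σ • ext1 ((e y).1))
    rw [← Matrix.mulVec_mulVec (c + σ • y) U D,
      ← Matrix.mulVec_mulVec (c + σ • ext1 ((e y).1)) U D]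
    refine congrArg U.mulVec (hDdep _ _ fun i hi => ?_)
    simp only [Pi.add_apply, Pi.smul_apply, smul_eq_mul]
    congr 1
    rw [hext1def]
    simp only [dif_pos (show p i from hi)]
    rfl
  have hf₂e : ∀ y, f₂ y = φ₂ ((e y).2) := by
    intro y
    rw [hf₂def, hφ₂def]
    show (V * (1 - P)).mulVec (c + σ • y) = (V * (1 - P)).mulVec (c + σ • ext2 ((e y).2))
    rw [← Matrix.mulVec_mulVec (c + σ • y) V (1 - P),
      ← Matrix.mulVec_mulVec (c + σ • ext2 ((e y).2)) V (1 - P)]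
    refine congrArg V.mulVec (hQdep _ _ fun i hi => ?_)
    simp only [Pi.add_apply, Pi.smul_apply, smul_eq_mul]
    congr 1
    rw [hext2def]
    simp only [dif_neg (show ¬ p i from hi)]
    rfl
  have hpair : g.map (fun y => (f₁ y, f₂ y)) = (g.map f₁).prod (g.map f₂) := by
    have hfun : (fun y => (f₁ y, f₂ y)) = (Prod.map φ₁ φ₂) ∘ e := by
      funext y
      show (f₁ y, f₂ y) = (φ₁ ((e y).1), φ₂ ((e y).2))
      rw [hf₁e, hf₂e]
    have hfst : g.map (Prod.fst ∘ ⇑e) = g₁ := by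
      rw [← Measure.map_map measurable_fst e.measurable, he.map_eq]
      exact Measure.fst_prod
    have hsnd : g.map (Prod.snd ∘ ⇑e) = g₂ := by
      rw [← Measure.map_map measurable_snd e.measurable, he.map_eq]
      exact Measure.snd_prod
    have hmapf₁ : g.map f₁ = g₁.map φ₁ := by
      have h1 : f₁ = φ₁ ∘ (Prod.fst ∘ ⇑e) := funext hf₁e
      rw [h1, ← Measure.map_map hmφ₁ (measurable_fst.comp e.measurable), hfst]
    have hmapf₂ : g.map f₂ = g₂.map φ₂ := by
      have h1 : f₂ = φ₂ ∘ (Prod.snd ∘ ⇑e) := funext hf₂e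
      rw [h1, ← Measure.map_map hmφ₂ (measurable_snd.comp e.measurable), hsnd]
    rw [hfun, ← Measure.map_map (hmφ₁.prodMap hmφ₂) e.measurable, he.map_eq,
      hmapf₁, hmapf₂]
    exact (Measure.map_prod_map _ _ hmφ₁ hmφ₂).symm
  -- ### Step 6 : the kernel and the compProd identity
  set ν : Measure (Fin n → ℝ) := Pr.map Xp with hνdef
  haveI : IsProbabilityMeasure ν := Measure.isProbabilityMeasure_map hmXp.aemeasurable
  have htrans : ∀ z : Fin m → ℝ, Measurable fun v : Fin n → ℝ => v + Wdag.mulVec z :=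
    fun z => measurable_id.add_const _
  have hmh : Measurable fun q : (Fin m → ℝ) × (Fin n → ℝ) => q.2 + Wdag.mulVec q.1 :=
    measurable_snd.add ((measurable_mulVec Wdag).comp measurable_fst)
  set κ : Kernel (Fin m → ℝ) (Fin n → ℝ) :=
    { toFun := fun z => ν.map (fun v => v + Wdag.mulVec z)
      measurable' := by
        refine Measure.measurable_of_measurable_coe _ fun s hs => ?_
        have heq : ∀ z : Fin m → ℝ, (ν.map (fun v => v + Wdag.mulVec z)) s
            = ν (Prod.mk z ⁻¹' ((fun q : (Fin m → ℝ) × (Fin n → ℝ) =>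
                q.2 + Wdag.mulVec q.1) ⁻¹' s)) := by
          intro z
          rw [Measure.map_apply (htrans z) hs]
          rfl
        simp_rw [heq]
        exact measurable_measure_prodMk_left (hmh hs) } with hκdef
  have hκapp : ∀ z, κ z = ν.map (fun v => v + Wdag.mulVec z) := fun z => rfl
  haveI : IsMarkovKernel κ := ⟨fun z => by
    rw [hκapp]
    exact Measure.isProbabilityMeasure_map (htrans z).aemeasurable⟩
  set ρ : Measure ((Fin m → ℝ) × (Fin n → ℝ)) := Pr.map (fun ω => (Z ω, X ω)) with hρdef
  haveI : IsProbabilityMeasure ρ := Measure.isProbabilityMeasure_map (hmZ.prodMk hX).aemeasurable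
  have hfst : ρ.fst = Pr.map Z := by
    rw [hρdef]
    exact Measure.fst_map_prodMk hX
  have hcompProd : ρ = ρ.fst ⊗ₘ κ := by
    rw [hfst]
    have stepA : (Pr.map Z) ⊗ₘ κ
        = ((Pr.map Z).prod ν).map (fun q => (q.1, q.2 + Wdag.mulVec q.1)) := by
      haveI : IsProbabilityMeasure (Pr.map Z) := Measure.isProbabilityMeasure_map hmZ.aemeasurable
      ext s hs
      rw [Measure.compProd_apply hs,
        Measure.map_apply (measurable_fst.prodMk hmh) hs,
        Measure.prod_apply ((measurable_fst.prodMk hmh) hs)]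
      refine lintegral_congr fun z => ?_
      rw [hκapp, Measure.map_apply (htrans z) (measurable_prodMk_left hs)]
      rfl
    have stepB : (Pr.map Z).prod ν = g.map (fun y => (f₁ y, f₂ y)) := by
      rw [hμZ, hνg, hpair]
    rw [stepA, stepB,
      Measure.map_map (measurable_fst.prodMk hmh) (hmf₁.prodMk hmf₂), hρlaw]
    congr 1
    funext y
    show (f₁ y, V.mulVec (c + σ • y)) = (f₁ y, f₂ y + Wdag.mulVec (f₁ y))
    exact Prod.ext rfl (hid4 y).symm
  -- ### Step 7 : conclusion via uniqueness of disintegration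
  have huniq := eq_condKernel_of_measure_eq_compProd κ hcompProd
  rw [← hfst]
  filter_upwards [huniq] with z hz
  rw [condDistrib_def]
  rw [hκapp] at hz
  exact hz.symm
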